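/- Define T_{n,k} = 2^{n-2k+1} * C(n-1, 2k-2) * S_{k-1}. Then for all n ≥ 1 and all k with 1 ≤ k ≤ floor((n+1)/2), the identity sum over ν from 0 to floor((n+1)/2) - k of C(k+ν, k) * T_{n, k+ν} = C(n-k+1, k) * S_{n-k} holds. -/

import Mathlib

/-- The n-th Catalan number S_n = (1/(n+1)) * C(2n, n). -/
def S (n : ℕ) : ℕ := Nat.choose (2 * n) n / (n + 1)

/-- T_{n,k} = 2^{n-2k+1} * C(n-1, 2k-2) * S_{k-1}. -/
def T (n k : ℕ) : ℕ := 2 ^ (n + 1 - 2 * k) * Nat.choose (n - 1) (2 * k - 2) * S (k - 1)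

lemma S_eq_catalan (n : ℕ) : S n = catalan n := by
  rw [catalan_eq_centralBinom_div, Nat.centralBinom_eq_two_mul_choose]
  rfl

lemma S_rec (p : ℕ) : (p + 2) * S (p + 1) = 2 * (2 * p + 1) * S p := by
  rw [S_eq_catalan, S_eq_catalan]
  refine Nat.eq_of_mul_eq_mul_left (show 0 < p + 1 by omega) ?_
  calc (p + 1) * ((p + 2) * catalan (p + 1))
      = (p + 1) * ((p + 1 + 1) * catalan (p + 1)) := by ring
    _ = (p + 1) * Nat.centralBinom (p + 1) := by
        rw [succ_mul_catalan_eq_centralBinom]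
    _ = 2 * (2 * p + 1) * Nat.centralBinom p := Nat.succ_mul_centralBinom_succ p
    _ = 2 * (2 * p + 1) * ((p + 1) * catalan p) := by
        rw [succ_mul_catalan_eq_centralBinom]
    _ = (p + 1) * (2 * (2 * p + 1) * catalan p) := by ring

lemma choose_shift (m k : ℕ) :
    (m + 1 - k) * Nat.choose (m + 1) k = (m + 1) * Nat.choose m k := by
  have h1 := Nat.add_one_mul_choose_eq m k
  have h2 := Nat.choose_succ_right_eq (m + 1) k
  calc (m + 1 - k) * Nat.choose (m + 1) k
      = Nat.choose (m + 1) k * (m + 1 - k) := Nat.mul_comm _ _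
    _ = Nat.choose (m + 1) (k + 1) * (k + 1) := h2.symm
    _ = (m + 1) * Nat.choose m k := h1.symm

lemma T_zero {n j : ℕ} (h : n - 1 < 2 * j - 2) : T n j = 0 := by
  unfold T
  rw [Nat.choose_eq_zero_of_lt h, mul_zero, zero_mul]

lemma Grec (p k : ℕ) :
    (p + 1 + 1 - k) * (Nat.choose (p + 1 + 1) k * S (p + 1))
      = 2 * (2 * p + 1) * (Nat.choose (p + 1) k * S p) := by
  have h1 := choose_shift (p + 1) k
  have h2 := S_rec p
  calc (p + 1 + 1 - k) * (Nat.choose (p + 1 + 1) k * S (p + 1))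
      = ((p + 1 + 1 - k) * Nat.choose (p + 1 + 1) k) * S (p + 1) := (mul_assoc _ _ _).symm
    _ = ((p + 1 + 1) * Nat.choose (p + 1) k) * S (p + 1) := by rw [h1]
    _ = Nat.choose (p + 1) k * ((p + 2) * S (p + 1)) := by ring
    _ = Nat.choose (p + 1) k * (2 * (2 * p + 1) * S p) := by rw [h2]
    _ = 2 * (2 * p + 1) * (Nat.choose (p + 1) k * S p) := by ring

lemma key (n k ν : ℕ) (hk1 : 1 ≤ k) (hkn : 2 * k ≤ n + 1) :
    n * (n + 2 - 2 * k) * (Nat.choose (k + ν) k * T (n + 1) (k + ν))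
      + 4 * (k + ν) * (ν + 1) * (Nat.choose (k + ν + 1) k * T (n + 1) (k + ν + 1))
    = 2 * n * (2 * n + 1 - 2 * k) * (Nat.choose (k + ν) k * T n (k + ν))
      + 4 * (k + ν - 1) * ν * (Nat.choose (k + ν) k * T (n + 1) (k + ν)) := by
  obtain ⟨K, rfl⟩ : ∃ K, k = K + 1 := ⟨k - 1, by omega⟩
  rcases le_or_gt (2 * (K + 1 + ν)) n with hc | hc
  · -- main case : n = 2*(K+1+ν) + e
    obtain ⟨e, rfl⟩ := Nat.exists_eq_add_of_le hc
    have hTa : T (2 * (K + 1 + ν) + e + 1) (K + 1 + ν)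
        = 2 ^ (e + 2) * Nat.choose (2 * (K + 1 + ν) + e) (2 * (K + ν)) * S (K + ν) := by
      unfold T
      rw [show 2 * (K + 1 + ν) + e + 1 + 1 - 2 * (K + 1 + ν) = e + 2 by omega,
        show 2 * (K + 1 + ν) + e + 1 - 1 = 2 * (K + 1 + ν) + e by omega,
        show 2 * (K + 1 + ν) - 2 = 2 * (K + ν) by omega,
        show K + 1 + ν - 1 = K + ν by omega]
    have hTb : T (2 * (K + 1 + ν) + e) (K + 1 + ν)
        = 2 ^ (e + 1) * Nat.choose (2 * (K + ν) + e + 1) (2 * (K + ν)) * S (K + ν) := by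
      unfold T
      rw [show 2 * (K + 1 + ν) + e + 1 - 2 * (K + 1 + ν) = e + 1 by omega,
        show 2 * (K + 1 + ν) + e - 1 = 2 * (K + ν) + e + 1 by omega,
        show 2 * (K + 1 + ν) - 2 = 2 * (K + ν) by omega,
        show K + 1 + ν - 1 = K + ν by omega]
    have hTc : T (2 * (K + 1 + ν) + e + 1) (K + 1 + ν + 1)
        = 2 ^ e * Nat.choose (2 * (K + 1 + ν) + e) (2 * (K + ν) + 2) * S (K + 1 + ν) := by
      unfold T
      rw [show 2 * (K + 1 + ν) + e + 1 + 1 - 2 * (K + 1 + ν + 1) = e by omega,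
        show 2 * (K + 1 + ν) + e + 1 - 1 = 2 * (K + 1 + ν) + e by omega,
        show 2 * (K + 1 + ν + 1) - 2 = 2 * (K + ν) + 2 by omega,
        show K + 1 + ν + 1 - 1 = K + 1 + ν by omega]
    have f1 : (ν + 1) * Nat.choose (K + 1 + ν + 1) (K + 1)
        = (K + 1 + ν + 1) * Nat.choose (K + 1 + ν) (K + 1) := by
      have h := choose_shift (K + 1 + ν) (K + 1)
      rwa [show K + 1 + ν + 1 - (K + 1) = ν + 1 by omega] at h
    have f2 : Nat.choose (2 * (K + ν) + e + 1) (2 * (K + ν)) * (2 * (K + 1 + ν) + e)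
        = Nat.choose (2 * (K + 1 + ν) + e) (2 * (K + ν)) * (e + 2) := by
      have h := Nat.choose_mul_succ_eq (2 * (K + ν) + e + 1) (2 * (K + ν))
      rwa [show 2 * (K + ν) + e + 1 + 1 = 2 * (K + 1 + ν) + e by omega,
        show 2 * (K + 1 + ν) + e - 2 * (K + ν) = e + 2 by omega] at h
    have f3 : Nat.choose (2 * (K + 1 + ν) + e) (2 * (K + ν) + 1) * (2 * (K + ν) + 1)
        = Nat.choose (2 * (K + 1 + ν) + e) (2 * (K + ν)) * (e + 2) := by
      have h := Nat.choose_succ_right_eq (2 * (K + 1 + ν) + e) (2 * (K + ν))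
      rwa [show 2 * (K + 1 + ν) + e - 2 * (K + ν) = e + 2 by omega] at h
    have f4 : Nat.choose (2 * (K + 1 + ν) + e) (2 * (K + ν) + 2) * (2 * (K + ν) + 2)
        = Nat.choose (2 * (K + 1 + ν) + e) (2 * (K + ν) + 1) * (e + 1) := by
      have h := Nat.choose_succ_right_eq (2 * (K + 1 + ν) + e) (2 * (K + ν) + 1)
      rwa [show 2 * (K + ν) + 1 + 1 = 2 * (K + ν) + 2 by omega,
        show 2 * (K + 1 + ν) + e - (2 * (K + ν) + 1) = e + 1 by omega] at h
    have f5 : (K + 1 + ν + 1) * S (K + 1 + ν) = 2 * (2 * (K + ν) + 1) * S (K + ν) := by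
      have h := S_rec (K + ν)
      rwa [show K + ν + 2 = K + 1 + ν + 1 by omega,
        show K + ν + 1 = K + 1 + ν by omega] at h
    rw [hTa, hTb, hTc,
      show 2 * (K + 1 + ν) + e + 2 - 2 * (K + 1) = 2 * ν + e + 2 by omega,
      show 2 * (2 * (K + 1 + ν) + e) + 1 - 2 * (K + 1) = 2 * K + 4 * ν + 2 * e + 3 by omega,
      show K + 1 + ν - 1 = K + ν by omega]
    zify at f1 f2 f3 f4 f5 ⊢
    linear_combination
      (4 * (2:ℤ) ^ e * ((K:ℤ) + 1 + ν)
        * (Nat.choose (2 * (K + 1 + ν) + e) (2 * (K + ν) + 2) : ℤ) * (S (K + 1 + ν) : ℤ)) * f1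
      + (4 * (2:ℤ) ^ e * ((K:ℤ) + 1 + ν) * (Nat.choose (K + 1 + ν) (K + 1) : ℤ)
        * (Nat.choose (2 * (K + 1 + ν) + e) (2 * (K + ν) + 2) : ℤ)) * f5
      + (4 * (2:ℤ) ^ e * (2 * ((K:ℤ) + ν) + 1) * (Nat.choose (K + 1 + ν) (K + 1) : ℤ)
        * (S (K + ν) : ℤ)) * f4
      + (4 * (2:ℤ) ^ e * ((e:ℤ) + 1) * (Nat.choose (K + 1 + ν) (K + 1) : ℤ)
        * (S (K + ν) : ℤ)) * f3
      - (4 * (2:ℤ) ^ e * (2 * (K:ℤ) + 4 * ν + 2 * e + 3) * (Nat.choose (K + 1 + ν) (K + 1) : ℤ)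
        * (S (K + ν) : ℤ)) * f2
  · rcases (show n = 2 * (K + ν) + 1 ∨ n = 2 * (K + ν) ∨ n + 1 ≤ 2 * (K + ν) by omega)
      with h | h | h
    · subst h
      have hTa : T (2 * (K + ν) + 1 + 1) (K + 1 + ν) = 2 * (2 * (K + ν) + 1) * S (K + ν) := by
        unfold T
        rw [show 2 * (K + ν) + 1 + 1 + 1 - 2 * (K + 1 + ν) = 1 by omega,
          show 2 * (K + ν) + 1 + 1 - 1 = 2 * (K + ν) + 1 by omega,
          show 2 * (K + 1 + ν) - 2 = 2 * (K + ν) by omega,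
          show K + 1 + ν - 1 = K + ν by omega,
          Nat.choose_succ_self_right, pow_one]
      have hTb : T (2 * (K + ν) + 1) (K + 1 + ν) = S (K + ν) := by
        unfold T
        rw [show 2 * (K + ν) + 1 + 1 - 2 * (K + 1 + ν) = 0 by omega,
          show 2 * (K + ν) + 1 - 1 = 2 * (K + ν) by omega,
          show 2 * (K + 1 + ν) - 2 = 2 * (K + ν) by omega,
          show K + 1 + ν - 1 = K + ν by omega,
          Nat.choose_self, pow_zero, one_mul, one_mul]
      have hTc : T (2 * (K + ν) + 1 + 1) (K + 1 + ν + 1) = 0 :=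
        T_zero (by omega)
      rw [hTa, hTb, hTc,
        show 2 * (K + ν) + 1 + 2 - 2 * (K + 1) = 2 * ν + 1 by omega,
        show 2 * (2 * (K + ν) + 1) + 1 - 2 * (K + 1) = 2 * K + 4 * ν + 1 by omega,
        show K + 1 + ν - 1 = K + ν by omega]
      simp only [mul_zero, add_zero]
      ring
    · subst h
      have hν : 1 ≤ ν := by omega
      have hTa : T (2 * (K + ν) + 1) (K + 1 + ν) = S (K + ν) := by
        unfold T
        rw [show 2 * (K + ν) + 1 + 1 - 2 * (K + 1 + ν) = 0 by omega,
          show 2 * (K + ν) + 1 - 1 = 2 * (K + ν) by omega,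
          show 2 * (K + 1 + ν) - 2 = 2 * (K + ν) by omega,
          show K + 1 + ν - 1 = K + ν by omega,
          Nat.choose_self, pow_zero, one_mul, one_mul]
      have hTb : T (2 * (K + ν)) (K + 1 + ν) = 0 := T_zero (by omega)
      have hTc : T (2 * (K + ν) + 1) (K + 1 + ν + 1) = 0 := T_zero (by omega)
      rw [hTa, hTb, hTc,
        show 2 * (K + ν) + 2 - 2 * (K + 1) = 2 * ν by omega,
        show K + 1 + ν - 1 = K + ν by omega]
      simp only [mul_zero, add_zero, zero_add]
      ring
    · have hTa : T (n + 1) (K + 1 + ν) = 0 := T_zero (by omega)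
      have hTb : T n (K + 1 + ν) = 0 := T_zero (by omega)
      have hTc : T (n + 1) (K + 1 + ν + 1) = 0 := T_zero (by omega)
      rw [hTa, hTb, hTc]
      simp

theorem binomial_weighted_T_sum (n k : ℕ) (hn : 1 ≤ n) (hk1 : 1 ≤ k)
    (hk2 : k ≤ (n + 1) / 2) :
    ∑ ν ∈ Finset.range ((n + 1) / 2 - k + 1), Nat.choose (k + ν) k * T n (k + ν)
      = Nat.choose (n - k + 1) k * S (n - k) := by
  revert hn hk2
  induction n with
  | zero => intro hn _; exact absurd hn (by omega)
  | succ n ih =>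
    intro hn hk2
    by_cases htop : 2 * k = n + 2
    · -- single term case
      rw [show (n + 1 + 1) / 2 - k + 1 = 1 by omega, Finset.sum_range_one]
      simp only [add_zero]
      rw [show n + 1 - k + 1 = k by omega, show n + 1 - k = k - 1 by omega,
        Nat.choose_self, one_mul, one_mul]
      unfold T
      rw [show n + 1 + 1 - 2 * k = 0 by omega, show n + 1 - 1 = n by omega,
        show 2 * k - 2 = n by omega, Nat.choose_self, pow_zero, one_mul, one_mul]
    · have hkn : 2 * k ≤ n + 1 := by omega
      have hk_le_n : k ≤ n := by omega
      have IH := ih (by omega) (by omega)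
      have Hsum :
          (∑ ν ∈ Finset.range ((n + 1 + 1) / 2 - k + 1),
            (n * (n + 2 - 2 * k) * (Nat.choose (k + ν) k * T (n + 1) (k + ν))
              + 4 * (k + ν) * (ν + 1) * (Nat.choose (k + ν + 1) k * T (n + 1) (k + ν + 1))))
          = ∑ ν ∈ Finset.range ((n + 1 + 1) / 2 - k + 1),
            (2 * n * (2 * n + 1 - 2 * k) * (Nat.choose (k + ν) k * T n (k + ν))
              + 4 * (k + ν - 1) * ν * (Nat.choose (k + ν) k * T (n + 1) (k + ν))) :=
        Finset.sum_congr rfl (fun ν _ => key n k ν hk1 hkn)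
      rw [Finset.sum_add_distrib, Finset.sum_add_distrib, ← Finset.mul_sum,
        ← Finset.mul_sum] at Hsum
      have htel :
          (∑ ν ∈ Finset.range ((n + 1 + 1) / 2 - k + 1),
            4 * (k + ν) * (ν + 1) * (Nat.choose (k + ν + 1) k * T (n + 1) (k + ν + 1)))
          = ∑ ν ∈ Finset.range ((n + 1 + 1) / 2 - k + 1),
            4 * (k + ν - 1) * ν * (Nat.choose (k + ν) k * T (n + 1) (k + ν)) := by
        have e1 := Finset.sum_range_succ'
          (fun ν => 4 * (k + ν - 1) * ν * (Nat.choose (k + ν) k * T (n + 1) (k + ν)))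
          ((n + 1 + 1) / 2 - k + 1)
        have e2 := Finset.sum_range_succ
          (fun ν => 4 * (k + ν - 1) * ν * (Nat.choose (k + ν) k * T (n + 1) (k + ν)))
          ((n + 1 + 1) / 2 - k + 1)
        simp only [← add_assoc, Nat.add_sub_cancel, mul_zero, zero_mul, add_zero] at e1
        rw [T_zero (show n + 1 - 1 < 2 * (k + ((n + 1 + 1) / 2 - k + 1)) - 2 by omega)] at e2
        simp only [mul_zero, add_zero] at e2
        exact e1.symm.trans e2
      rw [htel] at Hsum
      have Hcancel := Nat.add_right_cancel Hsum
      have hshrink :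
          (∑ ν ∈ Finset.range ((n + 1 + 1) / 2 - k + 1), Nat.choose (k + ν) k * T n (k + ν))
          = ∑ ν ∈ Finset.range ((n + 1) / 2 - k + 1), Nat.choose (k + ν) k * T n (k + ν) := by
        refine (Finset.sum_subset (Finset.range_subset_range.mpr (by omega)) ?_).symm
        intro x hx hnx
        rw [Finset.mem_range] at hx hnx
        rw [T_zero (show n - 1 < 2 * (k + x) - 2 by omega), mul_zero]
      rw [hshrink, IH] at Hcancel
      have hg : (n + 2 - 2 * k) * (Nat.choose (n - k + 2) k * S (n - k + 1))
          = 2 * (2 * n + 1 - 2 * k) * (Nat.choose (n - k + 1) k * S (n - k)) := by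
        have h := Grec (n - k) k
        rwa [show n - k + 1 + 1 - k = n + 2 - 2 * k by omega,
          show n - k + 1 + 1 = n - k + 2 by omega,
          show 2 * (n - k) + 1 = 2 * n + 1 - 2 * k by omega] at h
      rw [show n + 1 - k + 1 = n - k + 2 by omega, show n + 1 - k = n - k + 1 by omega]
      refine Nat.eq_of_mul_eq_mul_left
        (show 0 < n * (n + 2 - 2 * k) from Nat.mul_pos (by omega) (by omega)) ?_
      rw [Hcancel, show n * (n + 2 - 2 * k) * (Nat.choose (n - k + 2) k * S (n - k + 1))
        = n * ((n + 2 - 2 * k) * (Nat.choose (n - k + 2) k * S (n - k + 1))) from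
        mul_assoc _ _ _, hg]
      ring
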